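/- arXiv:1009.1230 — 2 statements merged into one kernel-verified Lean document; each statement's English description precedes it below -/
import Mathlib

section
/- Let S be the ℤ^d-graded polynomial ring as above and c ∈ ℕ_+^d. Let α ∈ ℕ^d with α ≤ c componentwise, let a_1, a_2, …, a_{t+1} be monomials of ℤ^d-degree α and b_1, b_2, …, b_t monomials of ℤ^d-degree c − α. Then the element Σ_{σ∈S_{t+1}} sgn(σ)·a_{σ(t+1)}·[b_1·a_{σ(1)}, b_2·a_{σ(2)}, …, b_t·a_{σ(t)}] is a Koszul cycle, i.e., belongs to Z_t(m^c, S). -/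
open Finset

section Koszul

variable {R : Type} [CommRing R] {ι : Type} [Fintype ι] [LinearOrder ι]

/-- The Koszul differential on `⋀ F ⊗ M`, modelled as `Finset ι → M`, for the Koszul
complex of the family `u : ι → R` with coefficients in `M`. -/
noncomputable def kD (u : ι → R) (M : Type) [AddCommGroup M] [Module R M] :
    (Finset ι → M) →ₗ[R] (Finset ι → M) where
  toFun f := fun J => ∑ i ∈ Jᶜ, ((-1 : ℤ) ^ (J.filter (· < i)).card) • u i • f (insert i J)
  map_add' f g := by
    funext J
    simp [smul_add, Finset.sum_add_distrib]
  map_smul' r f := by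
    funext J
    simp only [Pi.smul_apply, RingHom.id_apply]
    rw [Finset.smul_sum]
    refine Finset.sum_congr rfl fun i _ => ?_
    rw [smul_comm (u i) r, smul_comm ((-1 : ℤ) ^ (J.filter (· < i)).card) r]

variable (u : ι → R) (M : Type) [AddCommGroup M] [Module R M]

/-- The homological degree `t` part `K_t` of the Koszul complex, i.e. the elements
supported on subsets of cardinality `t`. -/
def kSupp (t : ℕ) : Submodule R (Finset ι → M) where
  carrier := {f | ∀ J : Finset ι, J.card ≠ t → f J = 0}
  add_mem' := by
    intro f g hf hg J hJ
    simp [Pi.add_apply, hf J hJ, hg J hJ]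
  zero_mem' := by intro J hJ; rfl
  smul_mem' := by
    intro c f hf J hJ
    simp [Pi.smul_apply, hf J hJ]

/-- Koszul cycles `Z_t(u, M)`. -/
noncomputable def kZ (t : ℕ) : Submodule R (Finset ι → M) :=
  kSupp M t ⊓ LinearMap.ker (kD u M)

/-- Koszul boundaries `B_t(u, M)`. -/
noncomputable def kB (t : ℕ) : Submodule R (Finset ι → M) :=
  kSupp M t ⊓ Submodule.map (kD u M) (kSupp M (t + 1))

/-- The sign `σ(A,B) = (-1)^{#{(a,b) ∈ A×B : a > b}}`. -/
def ksign (A B : Finset ι) : ℤ := (-1) ^ ((A ×ˢ B).filter fun p => p.2 < p.1).card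

/-- The multiplication `K(u,R) ⊗ K(u,M) → K(u,M)` of the Koszul complex, viewed as a module
over the exterior algebra. -/
def kMul (a : Finset ι → R) (f : Finset ι → M) : Finset ι → M :=
  fun J => ∑ A ∈ J.powerset, ksign A (J \ A) • a A • f (J \ A)

/-- The identity element of the Koszul algebra `K(u,R)`. -/
def kOne : Finset ι → R := fun J => if J = ∅ then 1 else 0

/-- Iterated Koszul product of a list of elements of `K(u,R)`. -/
def kProd (l : List (Finset ι → R)) : Finset ι → R := l.foldr (kMul R) kOne

end Koszul

section Graded

variable (K : Type) [Field K]

/-- The component of internal degree `q` of a direct sum of copies of a graded module `M`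
shifted by the weights `w`: an element `f : β → M` is homogeneous of degree `q` iff
each coordinate `f b` is homogeneous of degree `q - w b`. -/
noncomputable def piComp {A : Type} [AddCommMonoid A] {β M : Type} [AddCommGroup M] [Module K M]
    (w : β → A) (ν : A → Submodule K M) (q : A) : Submodule K (β → M) :=
  Submodule.pi Set.univ fun b => ⨆ q' ∈ {q' : A | q' + w b = q}, ν q'

/-- The component of internal degree `q` of the Koszul complex of `u : ι → R`
(generators of internal degrees `w : ι → A`) with coefficients in a graded module with
components `ν`. -/
noncomputable def kComp {A : Type} [AddCommMonoid A] {ι M : Type} [AddCommGroup M] [Module K M]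
    (w : ι → A) (ν : A → Submodule K M) (q : A) : Submodule K (Finset ι → M) :=
  piComp K (fun J : Finset ι => ∑ i ∈ J, w i) ν q

end Graded

section Resolutions

variable (K : Type) [Field K] {R : Type} [CommRing R] [Algebra K R]

/-- A graded free resolution of the graded `R`-module `P` (graded by `ν : ℕ → Submodule K P`)
over the graded `K`-algebra `R` (graded by `𝒜`): free modules `B i → R` with homogeneous
bases of degrees `deg i`, with exact graded differentials. -/
structure GFR (𝒜 : ℕ → Submodule K R) (P : Type) [AddCommGroup P] [Module R P] [Module K P]
    (ν : ℕ → Submodule K P) where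
  B : ℕ → Type
  fin : ∀ i, Fintype (B i)
  deg : ∀ i, B i → ℕ
  aug : (B 0 → R) →ₗ[R] P
  d : ∀ i, (B (i + 1) → R) →ₗ[R] (B i → R)
  surj : Function.Surjective aug
  exact0 : LinearMap.ker aug = LinearMap.range (d 0)
  exact : ∀ i, LinearMap.ker (d i) = LinearMap.range (d (i + 1))
  graded_aug : ∀ q f, f ∈ piComp K (deg 0) 𝒜 q → aug f ∈ ν q
  graded_d : ∀ i q f, f ∈ piComp K (deg (i + 1)) 𝒜 q → d i f ∈ piComp K (deg i) 𝒜 q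

/-- A minimal graded free resolution: a graded free resolution whose differentials map into
`m·F`, where `m` is the irrelevant maximal ideal. -/
structure MinGFR (𝒜 : ℕ → Submodule K R) (P : Type) [AddCommGroup P] [Module R P] [Module K P]
    (ν : ℕ → Submodule K P) extends GFR K 𝒜 P ν where
  min0 : ∀ f, aug f = 0 → ∀ b, f b ∈ Ideal.span (𝒜 1 : Set R)
  mind : ∀ i f b, d i f b ∈ Ideal.span (𝒜 1 : Set R)

/-- `regLE K 𝒜 P ν r` says that the Castelnuovo–Mumford regularity of the graded module
`(P, ν)` over the graded algebra `(R, 𝒜)` is at most `r`: in any minimal graded free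
resolution, the generators in homological degree `i` have degrees at most `r + i`,
i.e. `t_i(P) - i ≤ r` for all `i`. -/
def regLE (𝒜 : ℕ → Submodule K R) (P : Type) [AddCommGroup P] [Module R P] [Module K P]
    (ν : ℕ → Submodule K P) (r : ℕ) : Prop :=
  ∀ res : MinGFR K 𝒜 P ν, ∀ i, ∀ b : res.B i, res.deg i b ≤ r + i

end Resolutions

section GradingHelpers

variable (K : Type) [Field K] {S : Type} [CommRing S] [Algebra K S]
variable {P : Type} [AddCommGroup P] [Module S P] [Module K P] [IsScalarTower K S P]
variable {A : Type}

/-- The grading induced on a submodule of a graded module. -/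
noncomputable def subGrading (p : Submodule S P) (ν : A → Submodule K P) :
    A → Submodule K ↥p :=
  fun q => Submodule.comap ((p.subtype).restrictScalars K) (ν q)

/-- The grading induced on a quotient of a graded module. -/
noncomputable def quotGrading (p : Submodule S P) (ν : A → Submodule K P) :
    A → Submodule K (P ⧸ p) :=
  fun q => Submodule.map ((p.mkQ).restrictScalars K) (ν q)

end GradingHelpers

/-- The basis element `[u_x] = e_x` of `K_1` of the Koszul complex, corresponding to the
generator indexed by `x`. -/
def kGen {R : Type} [CommRing R] {ι : Type} [Fintype ι] [LinearOrder ι] (x : ι) :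
    Finset ι → R := fun J => if J = {x} then 1 else 0

set_option linter.unusedSectionVars false
section Aux

variable {R : Type} [CommRing R] {ι : Type} [Fintype ι] [LinearOrder ι]

/-- Left multiplication by the degree-one element `e_x` in explicit form. -/
def wedge (M : Type) [AddCommGroup M] [Module R M] (x : ι) (f : Finset ι → M) :
    Finset ι → M :=
  fun J => if x ∈ J then ((-1 : ℤ) ^ ((J.filter (· < x)).card)) • f (J.erase x) else 0

lemma ksign_singleton (x : ι) (B : Finset ι) :
    ksign {x} B = (-1 : ℤ) ^ ((B.filter (· < x)).card) := by
  unfold ksign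
  rw [Finset.singleton_product, Finset.filter_map, Finset.card_map]
  rfl

lemma kMul_kGen (M : Type) [AddCommGroup M] [Module R M] (x : ι) (f : Finset ι → M) :
    kMul (R := R) M (kGen x) f = wedge (R := R) M x f := by
  funext J
  unfold kMul wedge kGen
  by_cases hx : x ∈ J
  · rw [Finset.sum_eq_single ({x} : Finset ι)]
    · simp [Finset.sdiff_singleton_eq_erase, ksign_singleton,
        Finset.filter_erase, Finset.card_erase_of_mem, hx,
        (by simp : ¬ x < x)]
    · intro A _ hA
      simp [hA]
    · intro h
      exact absurd (Finset.mem_powerset.2 (Finset.singleton_subset_iff.2 hx)) h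
  · rw [if_neg hx]
    refine Finset.sum_eq_zero fun A hA => ?_
    have : A ≠ {x} := by
      rintro rfl
      exact hx (Finset.singleton_subset_iff.1 (Finset.mem_powerset.1 hA))
    simp [this]

end Aux

section Aux2

variable {R : Type} [CommRing R] {ι : Type} [Fintype ι] [LinearOrder ι]
variable (u : ι → R) (M : Type) [AddCommGroup M] [Module R M]

lemma kD_apply (g : Finset ι → M) (J : Finset ι) :
    kD u M g J = ∑ i ∈ Jᶜ, ((-1:ℤ) ^ ((J.filter (· < i)).card)) • u i • g (insert i J) := rfl

lemma kD_wedge (x : ι) (f : Finset ι → M) :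
    kD u M (wedge (R := R) M x f) = u x • f - wedge (R := R) M x (kD u M f) := by
  funext J
  by_cases hx : x ∈ J
  · have hxJc : x ∉ Jᶜ := by simp [hx]
    have hpe : ((J.erase x).filter (· < x)).card = (J.filter (· < x)).card := by
      rw [Finset.filter_erase, Finset.erase_eq_of_notMem (by simp)]
    have hRHS : (u x • f - wedge (R := R) M x (kD u M f)) J
        = u x • f J - ((-1:ℤ) ^ ((J.filter (· < x)).card)) • ∑ i ∈ (J.erase x)ᶜ,
            ((-1:ℤ) ^ (((J.erase x).filter (· < i)).card)) • u i • f (insert i (J.erase x)) := by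
      simp [wedge, hx, kD_apply]
    rw [hRHS, Finset.compl_erase, Finset.sum_insert hxJc, Finset.insert_erase hx, hpe,
      smul_add, smul_smul, ← pow_add, Even.neg_one_pow ⟨(J.filter (· < x)).card, rfl⟩,
      one_smul, sub_add_eq_sub_sub, sub_self, zero_sub, ← neg_smul, Finset.smul_sum,
      kD_apply]
    refine Finset.sum_congr rfl fun i hi => ?_
    have hiJ : i ∉ J := by simpa using hi
    have hix : i ≠ x := fun h => hiJ (h ▸ hx)
    have hwx : x ∈ insert i J := Finset.mem_insert_of_mem hx
    have herase : (insert i J).erase x = insert i (J.erase x) :=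
      Finset.erase_insert_of_ne hix
    rw [show wedge (R := R) M x f (insert i J)
        = ((-1:ℤ) ^ (((insert i J).filter (· < x)).card)) • f (insert i (J.erase x)) by
      simp [wedge, hwx, herase]]
    rw [smul_comm (u i), smul_smul, smul_smul]
    congr 1
    rcases hix.lt_or_gt with h | h
    · have hq : ((insert i J).filter (· < x)).card = (J.filter (· < x)).card + 1 := by
        rw [Finset.filter_insert, if_pos h,
          Finset.card_insert_of_notMem (fun hmem => hiJ (Finset.mem_filter.1 hmem).1)]
      have hc' : ((J.erase x).filter (· < i)).card = (J.filter (· < i)).card := by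
        rw [Finset.filter_erase, Finset.erase_eq_of_notMem
          (a := x) (s := J.filter (· < i))
          (fun hmem => absurd (Finset.mem_filter.1 hmem).2 (asymm h))]
      rw [hq, hc', pow_succ]
      ring
    · have hq : ((insert i J).filter (· < x)).card = (J.filter (· < x)).card := by
        rw [Finset.filter_insert, if_neg (asymm h)]
      have hxmem : x ∈ J.filter (· < i) := Finset.mem_filter.2 ⟨hx, h⟩
      have hc' : ((J.erase x).filter (· < i)).card + 1 = (J.filter (· < i)).card := by
        rw [Finset.filter_erase]
        exact Finset.card_erase_add_one hxmem
      rw [hq, ← hc', pow_succ]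
      ring
  · have hxJc : x ∈ Jᶜ := by simp [hx]
    have hRHS : (u x • f - wedge (R := R) M x (kD u M f)) J = u x • f J := by
      simp [wedge, hx]
    rw [hRHS, kD_apply, Finset.sum_eq_single x]
    · have herase : (insert x J).erase x = J := Finset.erase_insert hx
      have hq : ((insert x J).filter (· < x)).card = (J.filter (· < x)).card := by
        rw [Finset.filter_insert, if_neg (lt_irrefl x)]
      rw [show wedge (R := R) M x f (insert x J)
          = ((-1:ℤ) ^ (((insert x J).filter (· < x)).card)) • f J by
        simp [wedge, herase]]
      rw [hq, smul_comm (u x), smul_smul, ← pow_add,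
        Even.neg_one_pow ⟨(J.filter (· < x)).card, rfl⟩, one_smul]
    · intro i _ hix
      have : x ∉ insert i J := by
        simp only [Finset.mem_insert]
        rintro (rfl | h) <;> [exact hix rfl; exact hx h]
      rw [show wedge (R := R) M x f (insert i J) = 0 by simp [wedge, this]]
      simp
    · intro h
      exact absurd hxJc h

end Aux2

section Aux3

variable {R : Type} [CommRing R] {ι : Type} [Fintype ι] [LinearOrder ι]
variable (u : ι → R) (M : Type) [AddCommGroup M] [Module R M]

lemma mem_kSupp_iff (f : Finset ι → M) (t : ℕ) :
    f ∈ kSupp (R := R) M t ↔ ∀ J : Finset ι, J.card ≠ t → f J = 0 := Iff.rfl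

lemma wedge_sum {β : Type} (x : ι) (s : Finset β) (F : β → Finset ι → M) :
    wedge (R := R) M x (∑ i ∈ s, F i) = ∑ i ∈ s, wedge (R := R) M x (F i) := by
  funext J
  simp only [wedge, Finset.sum_apply]
  split
  · rw [Finset.smul_sum]
  · rw [Finset.sum_const_zero]

lemma wedge_smul (x : ι) (r : R) (f : Finset ι → M) :
    wedge (R := R) M x (r • f) = r • wedge (R := R) M x f := by
  funext J
  simp only [wedge, Pi.smul_apply]
  split
  · rw [smul_comm]
  · rw [smul_zero]

lemma wedge_zsmul (x : ι) (z : ℤ) (f : Finset ι → M) :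
    wedge (R := R) M x (z • f) = z • wedge (R := R) M x f := by
  funext J
  simp only [wedge, Pi.smul_apply]
  split
  · rw [smul_comm]
  · rw [smul_zero]

/-- `kE v` is the wedge product `e_{v 0} ∧ ⋯ ∧ e_{v (n-1)}`. -/
def kE {n : ℕ} (v : Fin n → ι) : Finset ι → R :=
  kProd (List.ofFn fun k => kGen (v k))

lemma kE_zero (v : Fin 0 → ι) : kE (R := R) v = kOne := by
  unfold kE
  rw [List.ofFn_zero]
  rfl

lemma kE_succ {n : ℕ} (v : Fin (n + 1) → ι) :
    kE (R := R) v = wedge (R := R) R (v 0) (kE (Fin.tail v)) := by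
  unfold kE
  rw [List.ofFn_succ]
  show kMul R (kGen (v 0)) _ = _
  rw [kMul_kGen]
  rfl

lemma kE_mem_kSupp : ∀ (n : ℕ) (v : Fin n → ι), kE (R := R) v ∈ kSupp (R := R) R n := by
  intro n
  induction n with
  | zero =>
    intro v
    rw [kE_zero, mem_kSupp_iff]
    intro J hJ
    have : J ≠ ∅ := fun h => hJ (by simp [h])
    simp [kOne, this]
  | succ n ih =>
    intro v
    rw [kE_succ, mem_kSupp_iff]
    intro J hJ
    unfold wedge
    split
    · rename_i hmem
      have hcard : (J.erase (v 0)).card ≠ n := by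
        intro h
        apply hJ
        rw [← Finset.card_erase_add_one hmem, h]
      rw [(mem_kSupp_iff (R := R) R _ n).1 (ih (Fin.tail v)) _ hcard, smul_zero]
    · rfl

lemma kD_kOne : kD u R (kOne : Finset ι → R) = 0 := by
  funext J
  rw [kD_apply]
  refine Finset.sum_eq_zero fun i _ => ?_
  simp [kOne, Finset.insert_ne_empty]

lemma kD_kE : ∀ (n : ℕ) (v : Fin (n + 1) → ι),
    kD u R (kE (R := R) v) = ∑ k : Fin (n + 1),
      ((-1 : ℤ) ^ (k : ℕ)) • u (v k) • kE (R := R) (Fin.removeNth k v) := by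
  intro n
  induction n with
  | zero =>
    intro v
    rw [kE_succ, kD_wedge, kE_zero (Fin.tail v), kD_kOne, Fin.sum_univ_one]
    rw [show wedge (R := R) R (v 0) 0 = 0 by funext J; simp [wedge]]
    rw [sub_zero, Fin.removeNth_zero, kE_zero (Fin.tail v)]
    norm_num
  | succ n ih =>
    intro v
    have htail : ∀ k : Fin (n + 1),
        Fin.tail (Fin.removeNth k.succ v) = Fin.removeNth k (Fin.tail v) := by
      intro k
      funext j
      simp [Fin.tail, Fin.removeNth, Fin.succ_succAbove_succ]
    have hwedgekE : ∀ k : Fin (n + 1),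
        wedge (R := R) R (v 0) (kE (R := R) (Fin.removeNth k (Fin.tail v)))
          = kE (R := R) (Fin.removeNth k.succ v) := by
      intro k
      have h0 : (Fin.removeNth k.succ v) 0 = v 0 := by
        simp [Fin.removeNth, Fin.succ_succAbove_zero]
      rw [kE_succ (Fin.removeNth k.succ v), htail k, h0]
    rw [kE_succ, kD_wedge, ih (Fin.tail v), wedge_sum]
    have hL : ∑ k : Fin (n + 1),
          wedge (R := R) R (v 0)
            (((-1:ℤ) ^ (k:ℕ)) • u (Fin.tail v k) • kE (R := R) (Fin.removeNth k (Fin.tail v)))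
        = ∑ k : Fin (n + 1),
            ((-1:ℤ) ^ (k:ℕ)) • u (v k.succ) • kE (R := R) (Fin.removeNth k.succ v) := by
      refine Finset.sum_congr rfl fun k _ => ?_
      rw [wedge_zsmul, wedge_smul, hwedgekE k]
      rfl
    rw [hL, Fin.sum_univ_succ
      (fun k : Fin (n + 2) => ((-1:ℤ) ^ (k:ℕ)) • u (v k) • kE (R := R) (Fin.removeNth k v))]
    rw [Fin.removeNth_zero, show (((0 : Fin (n + 2))):ℕ) = 0 from rfl, pow_zero, one_smul,
      sub_eq_add_neg, ← Finset.sum_neg_distrib]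
    congr 1
    refine Finset.sum_congr rfl fun k _ => ?_
    rw [show ((k.succ : Fin (n + 2)) : ℕ) = (k : ℕ) + 1 from Fin.val_succ k, pow_succ,
      mul_neg_one, neg_smul]

end Aux3

section Aux4

variable {R : Type} [CommRing R] {ι : Type} [Fintype ι] [LinearOrder ι]

/-- The symmetrized sum `Σ_σ sgn σ • a_{σ(t+1)} • [u_{idx 1 σ(1)}, …, u_{idx t σ(t)}]` is a
Koszul cycle, provided `a_l · u_{idx k l'}` is symmetric in `l, l'`. -/
lemma kD_symm_sum (u : ι → R) (t : ℕ) (aP : Fin (t + 1) → R) (idx : Fin t → Fin (t + 1) → ι)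
    (hsym : ∀ (k : Fin t) (l l' : Fin (t + 1)), aP l * u (idx k l') = aP l' * u (idx k l)) :
    kD u R (∑ σ : Equiv.Perm (Fin (t + 1)), (Equiv.Perm.sign σ : ℤ) •
      aP (σ (Fin.last t)) • kE (R := R) (fun k : Fin t => idx k (σ k.castSucc))) = 0 := by
  rw [map_sum]
  cases t with
  | zero =>
    refine Finset.sum_eq_zero fun σ _ => ?_
    rw [map_zsmul, map_smul, kE_zero, kD_kOne]
    simp
  | succ n =>
    have hC : ∀ σ : Equiv.Perm (Fin (n + 1 + 1)),
        kD u R ((Equiv.Perm.sign σ : ℤ) • aP (σ (Fin.last (n + 1))) •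
          kE (R := R) (fun k : Fin (n + 1) => idx k (σ k.castSucc)))
        = ∑ k : Fin (n + 1),
            ((Equiv.Perm.sign σ : ℤ) * (-1 : ℤ) ^ (k : ℕ)) •
              ((aP (σ (Fin.last (n + 1))) * u (idx k (σ k.castSucc))) •
                kE (R := R) (fun j : Fin n =>
                  idx (k.succAbove j) (σ ((k.succAbove j).castSucc)))) := by
      intro σ
      rw [map_zsmul, map_smul, kD_kE u n, Finset.smul_sum, Finset.smul_sum]
      refine Finset.sum_congr rfl fun k _ => ?_
      rw [smul_comm (aP (σ (Fin.last (n + 1)))) ((-1 : ℤ) ^ (k : ℕ)),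
        smul_smul ((Equiv.Perm.sign σ : ℤ)), smul_smul (aP (σ (Fin.last (n + 1))))]
      rfl
    rw [Finset.sum_congr rfl fun σ _ => hC σ, Finset.sum_comm]
    refine Finset.sum_eq_zero fun k _ => ?_
    have hne : k.castSucc ≠ Fin.last (n + 1) := (Fin.castSucc_lt_last k).ne
    refine Finset.sum_involution
      (fun σ _ => σ * Equiv.swap k.castSucc (Fin.last (n + 1))) ?_ ?_
      (fun _ _ => Finset.mem_univ _) ?_
    · intro σ _
      have hsign : ((Equiv.Perm.sign (σ * Equiv.swap k.castSucc (Fin.last (n + 1)))) : ℤ)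
          = -(Equiv.Perm.sign σ : ℤ) := by
        rw [Equiv.Perm.sign_mul, Equiv.Perm.sign_swap hne]
        simp
      have h1 : (σ * Equiv.swap k.castSucc (Fin.last (n + 1))) (Fin.last (n + 1))
          = σ k.castSucc := by
        simp [Equiv.Perm.mul_apply, Equiv.swap_apply_right]
      have h2 : (σ * Equiv.swap k.castSucc (Fin.last (n + 1))) k.castSucc
          = σ (Fin.last (n + 1)) := by
        simp [Equiv.Perm.mul_apply, Equiv.swap_apply_left]
      have h3 : (fun j : Fin n => idx (k.succAbove j)
            ((σ * Equiv.swap k.castSucc (Fin.last (n + 1))) ((k.succAbove j).castSucc)))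
          = (fun j : Fin n => idx (k.succAbove j) (σ ((k.succAbove j).castSucc))) := by
        funext j
        rw [Equiv.Perm.mul_apply, Equiv.swap_apply_of_ne_of_ne]
        · simpa [Fin.castSucc_inj] using Fin.succAbove_ne k j
        · exact (Fin.castSucc_lt_last _).ne
      rw [hsign, h1, h2, h3, hsym k (σ k.castSucc) (σ (Fin.last (n + 1))),
        neg_mul, neg_smul]
      exact add_neg_cancel _
    · intro σ _ _ h
      have h1 : Equiv.swap k.castSucc (Fin.last (n + 1)) = 1 :=
        mul_left_cancel (h.trans (mul_one σ).symm)
      have h2 := congrArg (fun e : Equiv.Perm (Fin (n + 1 + 1)) => e k.castSucc) h1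
      simp only [Equiv.swap_apply_left, Equiv.Perm.one_apply] at h2
      exact hne h2.symm
    · intro σ _
      show σ * Equiv.swap k.castSucc (Fin.last (n + 1)) *
          Equiv.swap k.castSucc (Fin.last (n + 1)) = σ
      rw [mul_assoc, Equiv.swap_mul_self, mul_one]

end Aux4

open MvPolynomial in
/-- **Symmetrized Koszul cycles (multigraded version of \[BCR, Lemma 3.4\]).**
Let `α ≤ c` componentwise, let `a_1, …, a_{t+1}` be monomials of multidegree `α` and
`b_1, …, b_t` monomials of multidegree `c − α`.  Then
`Σ_{σ ∈ S_{t+1}} sgn(σ) a_{σ(t+1)} [b_1 a_{σ(1)}, …, b_t a_{σ(t)}]` is a Koszul cycle in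
`Z_t(m^c, S)`, where the Koszul complex is taken on the family `u` of monomial generators
of `m^c`. -/
theorem symmetrized_koszul_cycles (K : Type) [Field K]
    (d : ℕ) (mdim : Fin (d + 1) → ℕ) (c : Fin (d + 1) → ℕ)
    (hm : ∀ i, 0 < mdim i) (hc : ∀ i, 0 < c i)
    (ι : Type) [Fintype ι] [LinearOrder ι]
    (u : ι → MvPolynomial ((i : Fin (d + 1)) × Fin (mdim i)) K)
    -- `u` enumerates the multidegree-`c` monomials, i.e. the monomial generators of `m^c`
    (hu : ∀ i, ∃ m : ((i : Fin (d + 1)) × Fin (mdim i)) →₀ ℕ,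
      Finsupp.weight (fun x => Pi.single x.1 1 : _ → Fin (d + 1) → ℕ) m = c ∧
        u i = monomial m 1)
    (hu' : ∀ m : ((i : Fin (d + 1)) × Fin (mdim i)) →₀ ℕ,
      Finsupp.weight (fun x => Pi.single x.1 1 : _ → Fin (d + 1) → ℕ) m = c →
        ∃! i, u i = monomial m 1)
    (t : ℕ) (α : Fin (d + 1) → ℕ) (hα : ∀ s, α s ≤ c s)
    -- monomials `a_1, …, a_{t+1}` of multidegree `α`
    (a : Fin (t + 1) → (((i : Fin (d + 1)) × Fin (mdim i)) →₀ ℕ))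
    (ha : ∀ k, Finsupp.weight (fun x => Pi.single x.1 1 : _ → Fin (d + 1) → ℕ) (a k) = α)
    -- monomials `b_1, …, b_t` of multidegree `c − α`
    (b : Fin t → (((i : Fin (d + 1)) × Fin (mdim i)) →₀ ℕ))
    (hb : ∀ k,
      Finsupp.weight (fun x => Pi.single x.1 1 : _ → Fin (d + 1) → ℕ) (b k) + α = c)
    -- `idx k l` is the generator of `m^c` equal to the monomial `b_k · a_l`
    (idx : Fin t → Fin (t + 1) → ι)
    (hidx : ∀ k l, u (idx k l) = monomial (b k + a l) 1) :
    (∑ σ : Equiv.Perm (Fin (t + 1)), (Equiv.Perm.sign σ : ℤ) •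
        (monomial (a (σ (Fin.last t))) (1 : K)) •
          kProd (List.ofFn fun k : Fin t => kGen (idx k (σ k.castSucc))))
      ∈ kZ u (MvPolynomial ((i : Fin (d + 1)) × Fin (mdim i)) K) t := by
  
  classical
  rw [kZ, Submodule.mem_inf]
  constructor
  · refine Submodule.sum_mem _ fun σ _ => ?_
    refine Submodule.smul_of_tower_mem _ _ (Submodule.smul_mem _ _ ?_)
    exact kE_mem_kSupp t (fun k => idx k (σ k.castSucc))
  · rw [LinearMap.mem_ker]
    refine kD_symm_sum u t (fun l => monomial (a l) (1 : K)) idx ?_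
    intro k l l'
    rw [hidx k l', hidx k l, MvPolynomial.monomial_mul, MvPolynomial.monomial_mul,
      one_mul]
    congr 1
    abel
end

section
/- Let R be a commutative ring, I ⊆ R an ideal and M a finitely generated R-module. Then I + Ann(M) ⊆ Ann(M/IM) ⊆ √(I + Ann(M)), where Ann denotes the annihilator and √ the radical of an ideal. -/
/-- For a commutative ring `R`, an ideal `I ⊆ R` and a finitely generated `R`-module `M`,
one has `I + Ann(M) ⊆ Ann(M/IM) ⊆ √(I + Ann(M))`. -/
theorem ann_quotient_bounds (R : Type) [CommRing R] (I : Ideal R)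
    (M : Type) [AddCommGroup M] [Module R M] [Module.Finite R M] :
    I + Module.annihilator R M ≤
        Module.annihilator R (M ⧸ (I • (⊤ : Submodule R M))) ∧
      Module.annihilator R (M ⧸ (I • (⊤ : Submodule R M))) ≤
        (I + Module.annihilator R M).radical := by
  constructor
  · apply sup_le
    · intro a ha
      rw [Module.mem_annihilator]
      intro m
      obtain ⟨m, rfl⟩ := Submodule.Quotient.mk_surjective _ m
      rw [← Submodule.Quotient.mk_smul, Submodule.Quotient.mk_eq_zero]
      exact Submodule.smul_mem_smul ha Submodule.mem_top
    · intro b hb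
      rw [Module.mem_annihilator] at hb ⊢
      intro m
      obtain ⟨m, rfl⟩ := Submodule.Quotient.mk_surjective _ m
      rw [← Submodule.Quotient.mk_smul, hb, Submodule.Quotient.mk_zero]
  · intro r hr
    rw [Module.mem_annihilator] at hr
    have hrange : LinearMap.range (r • (LinearMap.id : M →ₗ[R] M)) ≤
        I • (⊤ : Submodule R M) := by
      rintro _ ⟨m, rfl⟩
      have := hr (Submodule.Quotient.mk m)
      rw [← Submodule.Quotient.mk_smul, Submodule.Quotient.mk_eq_zero] at this
      simpa using this
    obtain ⟨p, hmon, -, hcoeff, haev⟩ :=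
      LinearMap.exists_monic_and_coeff_mem_pow_and_aeval_eq_zero_of_range_le_smul R
        (r • (LinearMap.id : M →ₗ[R] M)) I hrange
    -- `r • id = algebraMap R (End R M) r`
    have halg : (r • (LinearMap.id : M →ₗ[R] M)) =
        algebraMap R (Module.End R M) r := rfl
    rw [halg, Polynomial.aeval_algebraMap_apply] at haev
    have heval : Polynomial.aeval r p ∈ Module.annihilator R M := by
      rw [Module.mem_annihilator]
      intro m
      have : (algebraMap R (Module.End R M) (Polynomial.aeval r p)) m = 0 := by
        rw [haev]; rfl
      simpa using this
    rw [Polynomial.coe_aeval_eq_eval] at heval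
    -- r ^ natDegree p = eval r p - (lower terms), lower terms in I
    refine ⟨p.natDegree, ?_⟩
    have hsum : r ^ p.natDegree =
        Polynomial.eval r p - ∑ i ∈ Finset.range p.natDegree, p.coeff i * r ^ i := by
      rw [Polynomial.eval_eq_sum_range, Finset.sum_range_succ, hmon.coeff_natDegree, one_mul]
      ring
    rw [hsum]
    apply Ideal.sub_mem
    · exact Ideal.mem_sup_right heval
    · apply Ideal.mem_sup_left
      apply Ideal.sum_mem
      intro i hi
      rw [Finset.mem_range] at hi
      have : p.coeff i ∈ I := by
        have h := hcoeff i
        have : I ^ (p.natDegree - i) ≤ I :=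
          Ideal.pow_le_self (by omega)
        exact this h
      exact Ideal.mul_mem_right _ _ this
end
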